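/- Let L be a line arrangement over any field having a modular point of multiplicity m > 2 and a crossing point q of multiplicity n > m. Then p and q are the only modular points of L. -/

import Mathlib

open Projectivization

/-- The projective plane over `K`, with points (and, dually, lines) given by
projectivizing `K^3`. -/
abbrev PP (K : Type*) [Field K] := Projectivization K (Fin 3 → K)

/-- Incidence: the point `p` lies on the line `l` (given by dual coordinates):
the dot product of (any) homogeneous coordinates vanishes. -/
def incid {K : Type*} [Field K] (p l : PP K) : Prop :=
  dotProduct p.rep l.rep = 0

/-- The multiplicity of a point `p` with respect to a line arrangement `L`:
the number of lines of `L` passing through `p`. -/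
noncomputable def mult {K : Type*} [Field K] (L : Set (PP K)) (p : PP K) : ℕ :=
  {l ∈ L | incid p l}.ncard

/-- `p` is a crossing point of the arrangement `L`. -/
def crossing {K : Type*} [Field K] (L : Set (PP K)) (p : PP K) : Prop :=
  2 ≤ mult L p

/-- `p` is a modular point of `L`: a crossing point such that for every other
crossing point `q`, some line of `L` passes through both `p` and `q`. -/
def modular {K : Type*} [Field K] (L : Set (PP K)) (p : PP K) : Prop :=
  crossing L p ∧ ∀ q, crossing L q → q ≠ p → ∃ l ∈ L, incid p l ∧ incid q l

/-- `t_k`: the number of crossing points of `L` of multiplicity exactly `k`. -/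
noncomputable def tk {K : Type*} [Field K] (L : Set (PP K)) (k : ℕ) : ℕ :=
  {p | mult L p = k}.ncard

/-- A pencil: all lines pass through one common point. -/
def isPencil {K : Type*} [Field K] (L : Set (PP K)) : Prop :=
  ∃ p, ∀ l ∈ L, incid p l

/-- A near pencil: an arrangement of `s ≥ 3` lines, exactly `s - 1` of which
are concurrent. -/
def isNearPencil {K : Type*} [Field K] (L : Set (PP K)) : Prop :=
  3 ≤ L.ncard ∧ ∃ p, {l ∈ L | incid p l}.ncard + 1 = L.ncard

section Aux

open Matrix

variable {K : Type*} [Field K]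

lemma cross_triple_aux (u v w : Fin 3 → K) :
    crossProduct u (crossProduct v w) = (u ⬝ᵥ w) • v - (u ⬝ᵥ v) • w := by
  ext i
  fin_cases i <;>
    simp [crossProduct, dotProduct, Fin.sum_univ_three] <;> ring

lemma incid_symm_aux {a b : PP K} (h : incid a b) : incid b a := by
  unfold incid at *; rwa [dotProduct_comm]

lemma indep_of_ne_aux {p q : PP K} (h : p ≠ q) : LinearIndependent K ![p.rep, q.rep] := by
  rw [LinearIndependent.pair_iff' p.rep_nonzero]
  intro a ha
  apply h
  rw [← p.mk_rep, ← q.mk_rep]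
  exact ((Projectivization.mk_eq_mk_iff' K _ _ q.rep_nonzero p.rep_nonzero).mpr ⟨a, ha⟩).symm

lemma join_exists_aux {p q : PP K} (h : p ≠ q) : ∃ l : PP K, incid p l ∧ incid q l := by
  have hn : crossProduct p.rep q.rep ≠ 0 :=
    crossProduct_ne_zero_iff_linearIndependent.mpr (indep_of_ne_aux h)
  obtain ⟨a, ha⟩ := Projectivization.exists_smul_eq_mk_rep K _ hn
  refine ⟨Projectivization.mk K _ hn, ?_, ?_⟩
  · show p.rep ⬝ᵥ _ = 0
    rw [← ha, Units.smul_def, dotProduct_smul, dot_self_cross, smul_zero]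
  · show q.rep ⬝ᵥ _ = 0
    rw [← ha, Units.smul_def, dotProduct_smul, dot_cross_self, smul_zero]

lemma join_unique_aux {p q : PP K} (h : p ≠ q) {l1 l2 : PP K}
    (h1p : incid p l1) (h1q : incid q l1) (h2p : incid p l2) (h2q : incid q l2) :
    l1 = l2 := by
  have hn : crossProduct p.rep q.rep ≠ 0 :=
    crossProduct_ne_zero_iff_linearIndependent.mpr (indep_of_ne_aux h)
  have key : ∀ l : PP K, incid p l → incid q l →
      l = Projectivization.mk K _ hn := by
    intro l hpl hql
    have h1 : l.rep ⬝ᵥ p.rep = 0 := by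
      rw [dotProduct_comm]; exact hpl
    have h2 : l.rep ⬝ᵥ q.rep = 0 := by
      rw [dotProduct_comm]; exact hql
    have hz : crossProduct l.rep (crossProduct p.rep q.rep) = 0 := by
      rw [cross_triple_aux, h1, h2]; simp
    have hdep : ¬ LinearIndependent K ![l.rep, crossProduct p.rep q.rep] := fun hli =>
      (crossProduct_ne_zero_iff_linearIndependent.mpr hli) hz
    rw [LinearIndependent.pair_iff' l.rep_nonzero, not_forall] at hdep
    obtain ⟨a, ha⟩ := hdep
    push_neg at ha
    rw [← l.mk_rep]
    exact ((Projectivization.mk_eq_mk_iff' K _ _ hn l.rep_nonzero).mpr ⟨a, ha⟩).symm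
  rw [key l1 h1p h1q, key l2 h2p h2q]

lemma meet_unique_aux {l1 l2 : PP K} (h : l1 ≠ l2) {x y : PP K}
    (hx1 : incid x l1) (hx2 : incid x l2) (hy1 : incid y l1) (hy2 : incid y l2) :
    x = y :=
  join_unique_aux h (incid_symm_aux hx1) (incid_symm_aux hx2)
    (incid_symm_aux hy1) (incid_symm_aux hy2)

open Classical in
noncomputable def meetPt (l1 l2 : PP K) : PP K :=
  if h : l1 = l2 then l1 else
    (join_exists_aux h).choose

lemma meetPt_spec {l1 l2 : PP K} (h : l1 ≠ l2) :
    incid (meetPt l1 l2) l1 ∧ incid (meetPt l1 l2) l2 := by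
  unfold meetPt
  rw [dif_neg h]
  obtain ⟨ha, hb⟩ := (join_exists_aux h).choose_spec
  exact ⟨incid_symm_aux ha, incid_symm_aux hb⟩

end Aux

/-- if p is modular of multiplicity m > 2 and q is a crossing point
of multiplicity n > m, then p and q are the only modular points of L. -/
theorem only_two_modular_points {K : Type*} [Field K] (L : Set (PP K))
    (hfin : L.Finite) (p q : PP K) (m n : ℕ)
    (hp : modular L p) (hpm : mult L p = m) (hm : 2 < m)
    (hq : crossing L q) (hqn : mult L q = n) (hmn : m < n) :
    modular L q ∧ ∀ r, modular L r → r = p ∨ r = q := by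
  classical
  have hfinP : ∀ x : PP K, {l ∈ L | incid x l}.Finite :=
    fun x => hfin.subset (Set.sep_subset _ _)
  have hpq : p ≠ q := by
    rintro rfl
    rw [hpm] at hqn
    omega
  obtain ⟨e, heL, hpe, hqe⟩ := hp.2 q hq (Ne.symm hpq)
  have crossing_of_two : ∀ (s l1 l2 : PP K), l1 ∈ L → l2 ∈ L → l1 ≠ l2 →
      incid s l1 → incid s l2 → crossing L s := by
    intro s l1 l2 h1 h2 hne hi1 hi2
    have hsub : ({l1, l2} : Set (PP K)) ⊆ {l ∈ L | incid s l} := by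
      rintro x (rfl | rfl)
      · exact ⟨h1, hi1⟩
      · exact ⟨h2, hi2⟩
    have hle := Set.ncard_le_ncard hsub (hfinP s)
    rw [Set.ncard_pair hne] at hle
    exact hle
  have two_lines : ∀ s : PP K, crossing L s →
      ∃ l1 l2, l1 ∈ L ∧ incid s l1 ∧ l2 ∈ L ∧ incid s l2 ∧ l1 ≠ l2 := by
    intro s hs
    have h1 : 1 < {l ∈ L | incid s l}.ncard := lt_of_lt_of_le one_lt_two hs
    obtain ⟨a, b, ha, hb, hab⟩ := (Set.one_lt_ncard_iff (hfinP s)).mp h1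
    exact ⟨a, b, ha.1, ha.2, hb.1, hb.2, hab⟩
  -- Step A: every line of L passes through p or q
  have stepA : ∀ l ∈ L, incid p l ∨ incid q l := by
    intro l hl
    by_contra hcon
    push_neg at hcon
    obtain ⟨hpl, hql⟩ := hcon
    set f : PP K → PP K := fun b =>
      if h : ∃ c, c ∈ L ∧ incid p c ∧ incid (meetPt b l) c then h.choose else b with hf
    have hmaps : ∀ b ∈ {l' ∈ L | incid q l'},
        (f b ∈ {l' ∈ L | incid p l'}) ∧ incid (meetPt b l) (f b) := by
      intro b hb
      have hbl : b ≠ l := fun h => hql (h ▸ hb.2)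
      obtain ⟨hsb, hsl⟩ := meetPt_spec hbl
      have hcross : crossing L (meetPt b l) :=
        crossing_of_two _ b l hb.1 hl hbl hsb hsl
      have hsp : meetPt b l ≠ p := fun h => hpl (h ▸ hsl)
      obtain ⟨c, hcL, hpc, hsc⟩ := hp.2 _ hcross hsp
      have hex : ∃ c, c ∈ L ∧ incid p c ∧ incid (meetPt b l) c := ⟨c, hcL, hpc, hsc⟩
      rw [hf]
      simp only [dif_pos hex]
      obtain ⟨h1, h2, h3⟩ := hex.choose_spec
      exact ⟨⟨h1, h2⟩, h3⟩
    have hinj : Set.InjOn f {l' ∈ L | incid q l'} := by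
      intro b1 hb1 b2 hb2 hfe
      obtain ⟨⟨hcL1, hpc1⟩, hs1c⟩ := hmaps b1 hb1
      obtain ⟨⟨hcL2, hpc2⟩, hs2c⟩ := hmaps b2 hb2
      rw [← hfe] at hs2c
      have hb1l : b1 ≠ l := fun h => hql (h ▸ hb1.2)
      have hb2l : b2 ≠ l := fun h => hql (h ▸ hb2.2)
      obtain ⟨hs1b, hs1l⟩ := meetPt_spec hb1l
      obtain ⟨hs2b, hs2l⟩ := meetPt_spec hb2l
      have hcl : f b1 ≠ l := fun h => hpl (h ▸ hpc1)
      have hs12 : meetPt b1 l = meetPt b2 l :=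
        meet_unique_aux hcl hs1c hs1l hs2c hs2l
      have hqs : q ≠ meetPt b1 l := fun h => hql (h ▸ hs1l)
      exact join_unique_aux hqs hb1.2 hs1b hb2.2 (hs12 ▸ hs2b)
    have hle : n ≤ m := by
      rw [← hqn, ← hpm]
      exact Set.ncard_le_ncard_of_injOn f (fun b hb => (hmaps b hb).1) hinj (hfinP p)
    omega
  -- q is modular
  have qmod : modular L q := by
    refine ⟨hq, ?_⟩
    intro r hr hrq
    by_cases hrp : r = p
    · exact ⟨e, heL, hqe, hrp ▸ hpe⟩
    · obtain ⟨l1, l2, h1L, hr1, h2L, hr2, h12⟩ := two_lines r hr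
      rcases stepA l1 h1L with hp1 | hq1
      · rcases stepA l2 h2L with hp2 | hq2
        · exact absurd (join_unique_aux (Ne.symm hrp) hp1 hr1 hp2 hr2) h12
        · exact ⟨l2, h2L, hq2, hr2⟩
      · exact ⟨l1, h1L, hq1, hr1⟩
  refine ⟨qmod, ?_⟩
  intro r hr
  by_contra hcon
  push_neg at hcon
  obtain ⟨hrp, hrq⟩ := hcon
  obtain ⟨l1, l2, h1L, hr1, h2L, hr2, h12⟩ := two_lines r hr.1
  have hab : ∃ a b, a ∈ L ∧ incid p a ∧ incid r a ∧ b ∈ L ∧ incid q b ∧ incid r b := by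
    rcases stepA l1 h1L with h1 | h1 <;> rcases stepA l2 h2L with h2 | h2
    · exact absurd (join_unique_aux (Ne.symm hrp) h1 hr1 h2 hr2) h12
    · exact ⟨l1, l2, h1L, h1, hr1, h2L, h2, hr2⟩
    · exact ⟨l2, l1, h2L, h2, hr2, h1L, h1, hr1⟩
    · exact absurd (join_unique_aux (Ne.symm hrq) h1 hr1 h2 hr2) h12
  obtain ⟨a, b, haL, hpa, hra, hbL, hqb, hrb⟩ := hab
  have factF : ∀ l ∈ L, incid r l → l = a ∨ l = b := by
    intro l hl hrl
    rcases stepA l hl with h | h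
    · exact Or.inl (join_unique_aux (Ne.symm hrp) h hrl hpa hra)
    · exact Or.inr (join_unique_aux (Ne.symm hrq) h hrl hqb hrb)
  -- pick a' through p, distinct from a and e
  have hexa : ∃ a', a' ∈ L ∧ incid p a' ∧ a' ≠ a ∧ a' ≠ e := by
    by_contra hc
    push_neg at hc
    have hsub : {l ∈ L | incid p l} ⊆ ({a, e} : Set (PP K)) := by
      intro x hx
      rcases eq_or_ne x a with h | h
      · exact Or.inl h
      · exact Or.inr (by
          rcases eq_or_ne x e with h' | h'
          · exact h'
          · exact absurd h' (not_ne_iff.mpr (hc x hx.1 hx.2 h)))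
    have h1 : {l ∈ L | incid p l}.ncard ≤ 2 :=
      le_trans (Set.ncard_le_ncard hsub (Set.toFinite _))
        (le_trans (Set.ncard_insert_le a {e}) (by simp))
    have h2 : mult L p ≤ 2 := h1
    rw [hpm] at h2
    omega
  obtain ⟨a', haL', hpa', ha'a, ha'e⟩ := hexa
  have hqa' : ¬ incid q a' := fun h => ha'e (join_unique_aux hpq hpa' h hpe hqe)
  -- pick b' through q, distinct from b and e
  have hexb : ∃ b', b' ∈ L ∧ incid q b' ∧ b' ≠ b ∧ b' ≠ e := by
    by_contra hc
    push_neg at hc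
    have hsub : {l ∈ L | incid q l} ⊆ ({b, e} : Set (PP K)) := by
      intro x hx
      rcases eq_or_ne x b with h | h
      · exact Or.inl h
      · exact Or.inr (by
          rcases eq_or_ne x e with h' | h'
          · exact h'
          · exact absurd h' (not_ne_iff.mpr (hc x hx.1 hx.2 h)))
    have h1 : {l ∈ L | incid q l}.ncard ≤ 2 :=
      le_trans (Set.ncard_le_ncard hsub (Set.toFinite _))
        (le_trans (Set.ncard_insert_le b {e}) (by simp))
    have h2 : mult L q ≤ 2 := h1
    rw [hqn] at h2
    omega
  obtain ⟨b', hbL', hqb', hb'b, hb'e⟩ := hexb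
  have hpb' : ¬ incid p b' := fun h => hb'e (join_unique_aux hpq h hqb' hpe hqe)
  have ha'b' : a' ≠ b' := fun h => hpb' (h ▸ hpa')
  obtain ⟨hsa', hsb'⟩ := meetPt_spec ha'b'
  set s := meetPt a' b' with hs
  have hscross : crossing L s := crossing_of_two s a' b' haL' hbL' ha'b' hsa' hsb'
  have hra' : ¬ incid r a' := by
    intro h
    rcases factF a' haL' h with h' | h'
    · exact ha'a h'
    · exact hqa' (h' ▸ hqb)
  have hsr : s ≠ r := fun h => hra' (h ▸ hsa')
  obtain ⟨c, hcL, hrc, hsc⟩ := hr.2 s hscross hsr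
  rcases factF c hcL hrc with rfl | rfl
  · have hca' : c ≠ a' := fun h => hra' (h ▸ hrc)
    have hps : p = s := meet_unique_aux hca' hpa hpa' hsc hsa'
    exact hpb' (hps ▸ hsb')
  · have hcb' : c ≠ b' := by
      intro h
      subst h
      rcases factF c hbL' hrc with h' | h'
      · exact hqa' (by rw [h'] at hqb'; exact absurd hqb' (fun hh => hpb' (by rw [h'] ; exact hpa)))
      · exact hb'b h'
    have hqs : q = s := meet_unique_aux hcb' hqb hqb' hsc hsb'
    exact hqa' (hqs ▸ hsa')
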